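/- Let κ ≥ 0, M ≥ 0, K ≥ 0, 0 < L ≤ 2π and t ∈ ℝ. Let a, b : ℝ → ℝ be continuous with |b(τ)| ≤ κ for all τ ∈ [t−2π, t], and let g : ℝ → ℂ be continuous with |g(τ)| ≤ M for all τ ∈ [t−2π, t]. Assume that for every open interval I ⊂ [t−2π, t] with length |I| ≥ L there exists s ∈ I with ∫_s^t b(τ) dτ ≤ K. Then |∫₀^{2π} e^{i ∫_t^{t−s}(a(τ) + i b(τ)) dτ} g(t−s) ds| ≤ 2π e^{κL + K} M. -/

import Mathlib

/-- Key estimate for the backward integral representation: if on every open subinterval of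
`[t-2π, t]` of length at least `L` the primitive of `b` comes back within `K` of its value at
`t`, then the oscillatory integral is bounded by `2π e^{κL+K} M`. -/
theorem stmt_11 (κ M K L t : ℝ)
    (hκ : 0 ≤ κ) (hM : 0 ≤ M) (hK : 0 ≤ K) (hL0 : 0 < L) (hL2 : L ≤ 2 * Real.pi)
    (a b : ℝ → ℝ) (ha : Continuous a) (hb : Continuous b)
    (hbκ : ∀ τ ∈ Set.Icc (t - 2 * Real.pi) t, |b τ| ≤ κ)
    (g : ℝ → ℂ) (hg : Continuous g)
    (hgM : ∀ τ ∈ Set.Icc (t - 2 * Real.pi) t, ‖g τ‖ ≤ M)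
    (hosc : ∀ p q : ℝ, t - 2 * Real.pi ≤ p → q ≤ t → L ≤ q - p →
      ∃ s ∈ Set.Ioo p q, (∫ τ in s..t, b τ) ≤ K) :
    ‖∫ s in (0:ℝ)..(2 * Real.pi),
        Complex.exp (Complex.I *
          ∫ τ in t..(t - s), ((a τ : ℂ) + Complex.I * (b τ : ℂ))) * g (t - s)‖
      ≤ 2 * Real.pi * Real.exp (κ * L + K) * M := by
  have hπ : (0:ℝ) < 2 * Real.pi := by positivity
  -- Key: for s ∈ [0, 2π], ∫_{t-s}^t b ≤ κL + K
  have key : ∀ s ∈ Set.Icc (0:ℝ) (2 * Real.pi), (∫ τ in (t - s)..t, b τ) ≤ κ * L + K := by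
    intro s hs
    obtain ⟨hs0, hs2⟩ := hs
    set p := min (t - s) (t - L) with hp
    have hp1 : t - 2 * Real.pi ≤ p := le_min (by linarith) (by linarith)
    have hp2 : p + L ≤ t := by
      rcases le_or_gt s L with h1 | h1
      · have : p = t - L := min_eq_right (by linarith)
        linarith [this]
      · have : p = t - s := min_eq_left (by linarith)
        linarith [this]
    obtain ⟨s', hs', hs'K⟩ := hosc p (p + L) hp1 hp2 (by linarith)
    have hts_mem : t - s ∈ Set.Icc p (p + L) := by
      constructor
      · exact min_le_left _ _
      · rcases le_or_gt s L with h1 | h1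
        · have : p = t - L := min_eq_right (by linarith)
          rw [this]; linarith
        · have : p = t - s := min_eq_left (by linarith)
          rw [this]; linarith
    have hs'mem : s' ∈ Set.Icc p (p + L) := Set.Ioo_subset_Icc_self hs'
    have hsub : Set.uIcc (t - s) s' ⊆ Set.Icc (t - 2 * Real.pi) t := by
      apply Set.uIcc_subset_Icc
      · exact ⟨by linarith [hts_mem.1], by linarith [hts_mem.2]⟩
      · exact ⟨by linarith [hs'mem.1], by linarith [hs'mem.2]⟩
    have hsplit : (∫ τ in (t - s)..t, b τ) = (∫ τ in (t - s)..s', b τ) + ∫ τ in s'..t, b τ :=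
      (intervalIntegral.integral_add_adjacent_intervals (hb.intervalIntegrable _ _)
        (hb.intervalIntegrable _ _)).symm
    have hbound : |∫ τ in (t - s)..s', b τ| ≤ κ * L := by
      have h1 : |∫ τ in (t - s)..s', b τ| ≤ κ * |s' - (t - s)| := by
        rw [← Real.norm_eq_abs (∫ τ in (t - s)..s', b τ)]
        apply intervalIntegral.norm_integral_le_of_norm_le_const
        intro x hx
        exact hbκ x (hsub (Set.uIoc_subset_uIcc hx))
      have h2 : |s' - (t - s)| ≤ L := by
        rw [abs_le]
        constructor <;> [linarith [hs'mem.1, hts_mem.2]; linarith [hs'mem.2, hts_mem.1]]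
      calc |∫ τ in (t - s)..s', b τ| ≤ κ * |s' - (t - s)| := h1
        _ ≤ κ * L := by nlinarith [abs_nonneg (s' - (t - s))]
    rw [hsplit]
    have := abs_le.mp hbound
    linarith [this.2]
  -- pointwise bound on integrand
  have hC : (0:ℝ) ≤ Real.exp (κ * L + K) * M := by positivity
  have hmain : ‖∫ s in (0:ℝ)..(2 * Real.pi),
        Complex.exp (Complex.I *
          ∫ τ in t..(t - s), ((a τ : ℂ) + Complex.I * (b τ : ℂ))) * g (t - s)‖
      ≤ Real.exp (κ * L + K) * M * |2 * Real.pi - 0| := by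
    apply intervalIntegral.norm_integral_le_of_norm_le_const
    intro s hs
    have hs' : s ∈ Set.Icc (0:ℝ) (2 * Real.pi) := by
      rw [Set.uIoc_of_le (le_of_lt hπ)] at hs
      exact ⟨le_of_lt hs.1, hs.2⟩
    have hz : (∫ τ in t..(t - s), ((a τ : ℂ) + Complex.I * (b τ : ℂ)))
        = ((∫ τ in t..(t - s), a τ : ℝ) : ℂ) + Complex.I * ((∫ τ in t..(t - s), b τ : ℝ) : ℂ) := by
      rw [intervalIntegral.integral_add (Continuous.intervalIntegrable (by fun_prop) _ _)
        (Continuous.intervalIntegrable (by fun_prop) _ _),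
        intervalIntegral.integral_const_mul, intervalIntegral.integral_ofReal,
        intervalIntegral.integral_ofReal]
    have hre : (Complex.I * ∫ τ in t..(t - s), ((a τ : ℂ) + Complex.I * (b τ : ℂ))).re
        = ∫ τ in (t - s)..t, b τ := by
      rw [hz, intervalIntegral.integral_symm t (t - s)]
      simp
    rw [norm_mul, Complex.norm_exp, hre]
    have h1 : Real.exp (∫ τ in (t - s)..t, b τ) ≤ Real.exp (κ * L + K) :=
      Real.exp_le_exp.mpr (key s hs')
    have h2 : ‖g (t - s)‖ ≤ M := hgM _ ⟨by linarith [hs'.2], by linarith [hs'.1]⟩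
    exact mul_le_mul h1 h2 (norm_nonneg _) (Real.exp_nonneg _)
  calc _ ≤ Real.exp (κ * L + K) * M * |2 * Real.pi - 0| := hmain
    _ = 2 * Real.pi * Real.exp (κ * L + K) * M := by
        rw [sub_zero, abs_of_pos hπ]; ring
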